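/- arXiv:2507.23423 — 3 statements merged into one kernel-verified Lean document; each statement's English description precedes it below -/
import Mathlib

section
/- Let g be an M♮-convex function with finite nonempty effective domain and let b : E → {0,1}. Let x ∈ dom g and suppose there exists y ∈ dom g with ⟨b,y⟩ = ⟨b,x⟩ − 1. Then there exists a transition with respect to x, i.e., a pair (u,v) with u ∈ E_1 and v ∈ E_0 ∪ {z} such that x − χ_u + χ_v ∈ dom g. -/
open scoped BigOperators

/-- Characteristic vector of a singleton `{u}`. -/
def chiv {E : Type*} [DecidableEq E] (u : E) : E → ℤ := fun e => if e = u then 1 else 0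

/-- Characteristic vector allowing the dummy symbol `z` (modelled as `none`), with `χ_z = 0`. -/
def chiOpt {E : Type*} [DecidableEq E] (v : Option E) : E → ℤ :=
  fun e => match v with
  | none => 0
  | some w => chiv w e

/-- M♮-convexity (with nonempty effective domain) for `g : (E → ℤ) → ℝ ∪ {+∞}`. -/
def MnatConvex {E : Type*} [DecidableEq E] (g : (E → ℤ) → WithTop ℝ) : Prop :=
  (∃ x, g x < ⊤) ∧
  ∀ x y : E → ℤ, g x < ⊤ → g y < ⊤ → ∀ u : E, y u < x u →
    (g (x - chiv u) + g (y + chiv u) ≤ g x + g y) ∨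
    (∃ v : E, x v < y v ∧
      g (x - chiv u + chiv v) + g (y + chiv u - chiv v) ≤ g x + g y)

/-- `⟨b,x⟩ = ∑ e, b e * x e`. -/
def innerb {E : Type*} [Fintype E] (b : E → ℤ) (x : E → ℤ) : ℤ := ∑ e, b e * x e

/-- `𝒯_i`: the minimizers of `g` on `𝒫_i = {x ∈ dom g : ⟨b,x⟩ = i}`. -/
def Tset {E : Type*} [Fintype E] (g : (E → ℤ) → WithTop ℝ) (b : E → ℤ) (i : ℤ) :
    Set (E → ℤ) :=
  {x | g x < ⊤ ∧ innerb b x = i ∧ ∀ y : E → ℤ, g y < ⊤ → innerb b y = i → g x ≤ g y}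

/-- A transition `(u,v)` with respect to `x`: `u ∈ E₁`, `v ∈ E₀ ∪ {z}`, and
`x - χ_u + χ_v ∈ dom g`. -/
def IsTransition {E : Type*} [DecidableEq E] (g : (E → ℤ) → WithTop ℝ) (b : E → ℤ)
    (x : E → ℤ) (u : E) (v : Option E) : Prop :=
  b u = 1 ∧ (∀ w : E, v = some w → b w = 0) ∧ g (x - chiv u + chiOpt v) < ⊤

/-- The cost `g(x;u,v) = g(x - χ_u + χ_v) - g(x)` of a transition (as a real number;
both values are finite for transitions with respect to `x ∈ dom g`). -/
noncomputable def transCost {E : Type*} [DecidableEq E] (g : (E → ℤ) → WithTop ℝ)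
    (x : E → ℤ) (u : E) (v : Option E) : ℝ :=
  (g (x - chiv u + chiOpt v)).untopD 0 - (g x).untopD 0

/-- A minimum transition with respect to `x`. -/
def IsMinTransition {E : Type*} [Fintype E] [DecidableEq E] (g : (E → ℤ) → WithTop ℝ)
    (b : E → ℤ) (x : E → ℤ) (u : E) (v : Option E) : Prop :=
  IsTransition g b x u v ∧
    ∀ (u' : E) (v' : Option E), IsTransition g b x u' v' →
      transCost g x u v ≤ transCost g x u' v'

/-- if `x ∈ dom g` and some `y ∈ dom g` has `⟨b,y⟩ = ⟨b,x⟩ - 1`,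
then there exists a transition with respect to `x`. -/
theorem stmt_2 {E : Type*} [Fintype E] [DecidableEq E] [Nonempty E]
    (g : (E → ℤ) → WithTop ℝ) (b : E → ℤ)
    (hg : MnatConvex g)
    (hfin : {x : E → ℤ | g x < ⊤}.Finite)
    (hb : ∀ e : E, b e = 0 ∨ b e = 1)
    (x : E → ℤ) (hx : g x < ⊤)
    (y : E → ℤ) (hy : g y < ⊤) (hby : innerb b y = innerb b x - 1) :
    ∃ (u : E) (v : Option E), IsTransition g b x u v :=  by
  suffices H : ∀ n : ℕ, ∀ y : E → ℤ, g y < ⊤ → innerb b y = innerb b x - 1 →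
      (∑ e, (x e - y e).natAbs) = n → ∃ (u : E) (v : Option E), IsTransition g b x u v by
    exact H _ y hy hby rfl
  intro n
  induction n using Nat.strong_induction_on with
  | _ n ih =>
    intro y hy hby hd
    -- find u with b u = 1 and y u < x u
    have hsum1 : ∑ e, b e * (x e - y e) = 1 := by
      have h1 : innerb b x - innerb b y = 1 := by omega
      have : (∑ e, b e * x e) - (∑ e, b e * y e) = 1 := h1
      calc ∑ e, b e * (x e - y e) = (∑ e, b e * x e) - (∑ e, b e * y e) := by
            rw [← Finset.sum_sub_distrib]; exact Finset.sum_congr rfl (fun e _ => by ring)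
        _ = 1 := this
    obtain ⟨u, hbu, hu⟩ : ∃ u : E, b u = 1 ∧ y u < x u := by
      by_contra hcon
      push_neg at hcon
      have hle : ∑ e, b e * (x e - y e) ≤ 0 := by
        apply Finset.sum_nonpos
        intro e _
        rcases hb e with h0 | h1
        · simp [h0]
        · have := hcon e h1
          have : x e - y e ≤ 0 := by omega
          nlinarith [this]
      omega
    rcases hg.2 x y hx hy u hu with h | ⟨v, hv, h⟩
    · -- case (i): transition (u, none)
      refine ⟨u, none, hbu, by simp, ?_⟩
      have hlt : g (x - chiv u) + g (y + chiv u) < ⊤ :=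
        lt_of_le_of_lt h (WithTop.add_lt_top.2 ⟨hx, hy⟩)
      have hfin0 := (WithTop.add_lt_top.1 hlt).1
      have hz : chiOpt (none : Option E) = (0 : E → ℤ) := rfl
      rw [hz, add_zero]
      exact hfin0
    · have hlt : g (x - chiv u + chiv v) + g (y + chiv u - chiv v) < ⊤ :=
        lt_of_le_of_lt h (WithTop.add_lt_top.2 ⟨hx, hy⟩)
      have hfin1 := (WithTop.add_lt_top.1 hlt).1
      have hfin2 := (WithTop.add_lt_top.1 hlt).2
      rcases hb v with hbv | hbv
      · -- case (ii) with b v = 0: transition (u, some v)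
        refine ⟨u, some v, hbu, ?_, ?_⟩
        · intro w hw; cases hw; exact hbv
        · exact hfin1
      · -- case (ii) with b v = 1: recurse with y' = y + χ_u - χ_v
        have huv : u ≠ v := by
          intro hEq; subst hEq; omega
        set y' : E → ℤ := y + chiv u - chiv v with hy'def
        have hby' : innerb b y' = innerb b x - 1 := by
          have : innerb b y' = innerb b y + b u - b v := by
            simp only [innerb, hy'def, Pi.add_apply, Pi.sub_apply, chiv,
              mul_add, mul_sub, Finset.sum_add_distrib, Finset.sum_sub_distrib,
              mul_ite, mul_one, mul_zero, Finset.sum_ite_eq', Finset.mem_univ, if_true]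
          omega
        -- distance decreases
        have hyval : ∀ e : E, y' e = y e + (if e = u then 1 else 0) - (if e = v then 1 else 0) := by
          intro e; simp [hy'def, chiv]
        have hvu : v ∈ Finset.univ.erase u := Finset.mem_erase.2 ⟨Ne.symm huv, Finset.mem_univ v⟩
        have hdecomp : ∀ f : E → ℕ, ∑ e, f e = f u + (f v + ∑ e ∈ (Finset.univ.erase u).erase v, f e) := by
          intro f
          rw [Finset.add_sum_erase _ f hvu, Finset.add_sum_erase _ f (Finset.mem_univ u)]
        have hcong : ∑ e ∈ (Finset.univ.erase u).erase v, (x e - y' e).natAbs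
            = ∑ e ∈ (Finset.univ.erase u).erase v, (x e - y e).natAbs := by
          refine Finset.sum_congr rfl (fun e he => ?_)
          have he1 : e ≠ v := (Finset.mem_erase.1 he).1
          have he2 : e ≠ u := (Finset.mem_erase.1 (Finset.mem_erase.1 he).2).1
          rw [hyval e]; simp [he1, he2]
        have hu' : (x u - y' u).natAbs < (x u - y u).natAbs := by
          have h1 : y' u = y u + 1 := by rw [hyval u]; simp [huv]
          rw [h1]; omega
        have hv' : (x v - y' v).natAbs < (x v - y v).natAbs := by
          have h1 : y' v = y v - 1 := by rw [hyval v]; simp [Ne.symm huv]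
          rw [h1]; omega
        have hdlt : (∑ e, (x e - y' e).natAbs) < n := by
          rw [← hd, hdecomp (fun e => (x e - y' e).natAbs),
            hdecomp (fun e => (x e - y e).natAbs), hcong]
          omega
        exact ih _ hdlt y' hfin2 hby' rfl
end

section
/- Let g be an M♮-convex function with finite nonempty effective domain and let b : E → {0,1}. Let k be an integer with k̲ + 1 ≤ k ≤ k̄, let x_k ∈ 𝒯_k, and let (u*, v*) be a minimum transition with respect to x_k. Then x_k − χ_{u*} + χ_{v*} ∈ 𝒯_{k−1}. -/
open scoped BigOperators

section AuxLemmas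

variable {E : Type*} [Fintype E] [DecidableEq E]

lemma innerb_sub_chiv_add_chiv (b x : E → ℤ) (u v : E) :
    innerb b (x - chiv u + chiv v) = innerb b x - b u + b v := by
  simp only [innerb, chiv, Pi.add_apply, Pi.sub_apply, mul_add, mul_sub, mul_ite, mul_one,
    mul_zero, Finset.sum_add_distrib, Finset.sum_sub_distrib, Finset.sum_ite_eq',
    Finset.mem_univ, if_true]

lemma innerb_sub_chiv (b x : E → ℤ) (u : E) :
    innerb b (x - chiv u) = innerb b x - b u := by
  simp only [innerb, chiv, Pi.sub_apply, mul_sub, mul_ite, mul_one, mul_zero,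
    Finset.sum_sub_distrib, Finset.sum_ite_eq', Finset.mem_univ, if_true]

lemma innerb_add_chiv (b x : E → ℤ) (u : E) :
    innerb b (x + chiv u) = innerb b x + b u := by
  simp only [innerb, chiv, Pi.add_apply, mul_add, mul_ite, mul_one, mul_zero,
    Finset.sum_add_distrib, Finset.sum_ite_eq', Finset.mem_univ, if_true]

lemma innerb_add_chiv_sub_chiv (b x : E → ℤ) (u v : E) :
    innerb b (x + chiv u - chiv v) = innerb b x + b u - b v := by
  simp only [innerb, chiv, Pi.add_apply, Pi.sub_apply, mul_add, mul_sub, mul_ite, mul_one,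
    mul_zero, Finset.sum_add_distrib, Finset.sum_sub_distrib, Finset.sum_ite_eq',
    Finset.mem_univ, if_true]

lemma chiOpt_none_eq : chiOpt (none : Option E) = (0 : E → ℤ) := rfl

lemma chiOpt_some_eq (w : E) : chiOpt (some w) = chiv w := rfl

end AuxLemmas

/-- applying a minimum transition to `x_k ∈ 𝒯_k` (with `k̲+1 ≤ k ≤ k̄`)
yields a point of `𝒯_{k-1}`. -/
theorem stmt_3 {E : Type*} [Fintype E] [DecidableEq E] [Nonempty E]
    (g : (E → ℤ) → WithTop ℝ) (b : E → ℤ)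
    (hg : MnatConvex g)
    (hfin : {x : E → ℤ | g x < ⊤}.Finite)
    (hb : ∀ e : E, b e = 0 ∨ b e = 1)
    (kmin kmax : ℤ)
    (hkmin : (Tset g b kmin).Nonempty ∧ ∀ k : ℤ, (Tset g b k).Nonempty → kmin ≤ k)
    (hkmax : (Tset g b kmax).Nonempty ∧ ∀ k : ℤ, (Tset g b k).Nonempty → k ≤ kmax)
    (k : ℤ) (hk1 : kmin + 1 ≤ k) (hk2 : k ≤ kmax)
    (xk : E → ℤ) (hxk : xk ∈ Tset g b k)
    (us : E) (vs : Option E) (hmin : IsMinTransition g b xk us vs) :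
    xk - chiv us + chiOpt vs ∈ Tset g b (k - 1) := by
  obtain ⟨hx, hxi, hxmin⟩ := hxk
  obtain ⟨⟨hus1, hvs0, hysfin⟩, hcost⟩ := hmin
  -- level of y*
  have hysi : innerb b (xk - chiv us + chiOpt vs) = k - 1 := by
    cases vs with
    | none => rw [chiOpt_none_eq, add_zero, innerb_sub_chiv, hxi, hus1]
    | some w =>
        rw [chiOpt_some_eq, innerb_sub_chiv_add_chiv, hxi, hus1, hvs0 w rfl]
        ring
  refine ⟨hysfin, hysi, ?_⟩
  -- main claim via strong induction on the ℓ1 distance from xk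
  suffices main : ∀ n : ℕ, ∀ y : E → ℤ, g y < ⊤ → innerb b y = k - 1 →
      (∑ e, (xk e - y e).natAbs) = n → g (xk - chiv us + chiOpt vs) ≤ g y by
    intro y hy hyi
    exact main _ y hy hyi rfl
  intro n
  induction n using Nat.strong_induction_on with
  | _ n ih =>
  intro y hy hyi hd
  -- find u with b u = 1 and y u < xk u
  have hsum : ∑ e, b e * (xk e - y e) = 1 := by
    have h1 : ∑ e, b e * (xk e - y e) = innerb b xk - innerb b y := by
      simp [innerb, mul_sub, Finset.sum_sub_distrib]
    rw [h1, hxi, hyi]; ring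
  have hu : ∃ u, b u = 1 ∧ y u < xk u := by
    by_contra hc
    push_neg at hc
    have hle : ∑ e, b e * (xk e - y e) ≤ 0 := by
      apply Finset.sum_nonpos
      intro e _
      rcases hb e with h0 | h1
      · simp [h0]
      · have := hc e h1
        rw [h1, one_mul]
        omega
    omega
  obtain ⟨u, hu1, hu2⟩ := hu
  lift g xk to ℝ using hx.ne with A hA
  lift g y to ℝ using hy.ne with B hB
  lift g (xk - chiv us + chiOpt vs) to ℝ using hysfin.ne with S hS
  rcases hg.2 xk y (hA ▸ hx) (hB ▸ hy) u hu2 with h | ⟨v, hv, h⟩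
  · -- case (i)
    rw [← hA, ← hB] at h
    have hlt : g (xk - chiv u) + g (y + chiv u) < ⊤ :=
      lt_of_le_of_lt h (WithTop.add_lt_top.mpr ⟨WithTop.coe_lt_top A, WithTop.coe_lt_top B⟩)
    obtain ⟨hC, hD⟩ := WithTop.add_lt_top.mp hlt
    lift g (xk - chiv u) to ℝ using hC.ne with C hCc
    lift g (y + chiv u) to ℝ using hD.ne with D hDc
    rw [← WithTop.coe_add, ← WithTop.coe_add, WithTop.coe_le_coe] at h
    -- (u, none) is a transition
    have htr : IsTransition g b xk u none := by
      refine ⟨hu1, ?_, ?_⟩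
      · intro w hw; cases hw
      · rw [chiOpt_none_eq, add_zero, ← hCc]
        exact WithTop.coe_lt_top C
    have hcle := hcost u none htr
    rw [transCost, transCost, chiOpt_none_eq, add_zero, ← hA, ← hS, ← hCc] at hcle
    simp only [WithTop.untopD_coe] at hcle
    -- g xk ≤ g (y + chiv u) since it has level k
    have hDi : innerb b (y + chiv u) = k := by rw [innerb_add_chiv, hyi, hu1]; ring
    have hAD := hxmin _ (by rw [← hDc]; exact WithTop.coe_lt_top D) hDi
    rw [← hDc, WithTop.coe_le_coe] at hAD
    exact WithTop.coe_le_coe.mpr (by linarith)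
  · -- case (ii)
    rw [← hA, ← hB] at h
    have hlt : g (xk - chiv u + chiv v) + g (y + chiv u - chiv v) < ⊤ :=
      lt_of_le_of_lt h (WithTop.add_lt_top.mpr ⟨WithTop.coe_lt_top A, WithTop.coe_lt_top B⟩)
    obtain ⟨hC, hD⟩ := WithTop.add_lt_top.mp hlt
    lift g (xk - chiv u + chiv v) to ℝ using hC.ne with C hCc
    lift g (y + chiv u - chiv v) to ℝ using hD.ne with D hDc
    rw [← WithTop.coe_add, ← WithTop.coe_add, WithTop.coe_le_coe] at h
    rcases hb v with hv0 | hv1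
    · -- b v = 0 : (u, some v) is a transition
      have htr : IsTransition g b xk u (some v) := by
        refine ⟨hu1, ?_, ?_⟩
        · intro w hw; injection hw with hw; rw [← hw]; exact hv0
        · rw [chiOpt_some_eq, ← hCc]
          exact WithTop.coe_lt_top C
      have hcle := hcost u (some v) htr
      rw [transCost, transCost, chiOpt_some_eq, ← hA, ← hS, ← hCc] at hcle
      simp only [WithTop.untopD_coe] at hcle
      have hDi : innerb b (y + chiv u - chiv v) = k := by
        rw [innerb_add_chiv_sub_chiv, hyi, hu1, hv0]; ring
      have hAD := hxmin _ (by rw [← hDc]; exact WithTop.coe_lt_top D) hDi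
      rw [← hDc, WithTop.coe_le_coe] at hAD
      exact WithTop.coe_le_coe.mpr (by linarith)
    · -- b v = 1 : move to y' = y + chiv u - chiv v, strictly closer to xk
      set y' : E → ℤ := y + chiv u - chiv v with hy'
      have hy'i : innerb b y' = k - 1 := by
        rw [hy', innerb_add_chiv_sub_chiv, hyi, hu1, hv1]; ring
      have hCi : innerb b (xk - chiv u + chiv v) = k := by
        rw [innerb_sub_chiv_add_chiv, hxi, hu1, hv1]; ring
      have hAC := hxmin _ (by rw [← hCc]; exact WithTop.coe_lt_top C) hCi
      rw [← hCc, WithTop.coe_le_coe] at hAC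
      have hDB : D ≤ B := by linarith
      have huv : u ≠ v := by
        intro hEq; rw [hEq] at hu2; omega
      have hpt : ∀ e, (xk e - y e).natAbs =
          (xk e - y' e).natAbs + ((if e = u then 1 else 0) + (if e = v then 1 else 0)) := by
        intro e
        simp only [hy', Pi.add_apply, Pi.sub_apply, chiv]
        by_cases h1 : e = u
        · subst h1
          simp [huv]
          try omega
        · by_cases h2 : e = v
          · subst h2
            simp [Ne.symm huv, h1]
            try omega
          · simp [h1, h2]
            try omega
      have hdist : (∑ e, (xk e - y' e).natAbs) + 2 = n := by
        rw [← hd]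
        rw [Finset.sum_congr rfl (fun e _ => hpt e)]
        rw [Finset.sum_add_distrib, Finset.sum_add_distrib]
        simp [Finset.sum_ite_eq']
      have hy'fin : g y' < ⊤ := by rw [← hDc]; exact WithTop.coe_lt_top D
      have hIH := ih (∑ e, (xk e - y' e).natAbs) (by omega) y' hy'fin hy'i rfl
      have hlast : g y' ≤ (B : WithTop ℝ) := by
        rw [← hDc]; exact WithTop.coe_le_coe.mpr hDB
      exact hIH.trans hlast
end

section
/- Let g be an M♮-convex function with finite nonempty effective domain and let b : E → {0,1}. Let {x_k}_{k=k̲}^{k̄} be a sequence such that x_k ∈ 𝒯_k for all k and, for each k ∈ {k̲+1, …, k̄}, x_{k−1} = x_k − χ_{u_k} + χ_{v_k} for some minimum transition (u_k, v_k) with respect to x_k. Assume k̲ + 1 ≤ k̄ and suppose there exists an index j ∈ {k̲+1, …, k̄} such that g(x_j) < g(x_{j−1}). Then for every k ∈ {k̲, …, j}, the point x_k is a Pareto optimal solution of the biobjective problem of minimizing (g(x), ⟨b,x⟩) over x ∈ dom g, i.e., there is no y ∈ dom g with g(y) ≤ g(x_k), ⟨b,y⟩ ≤ ⟨b,x_k⟩,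 and (g(y), ⟨b,y⟩) ≠ (g(x_k), ⟨b,x_k⟩). -/
open scoped BigOperators

section
variable {E : Type*} [Fintype E] [DecidableEq E]

set_option linter.unusedSectionVars false

lemma innerb_add (b x y : E → ℤ) : innerb b (x + y) = innerb b x + innerb b y := by
  simp [innerb, mul_add, Finset.sum_add_distrib]

lemma innerb_sub (b x y : E → ℤ) : innerb b (x - y) = innerb b x - innerb b y := by
  simp [innerb, mul_sub, Finset.sum_sub_distrib]

lemma innerb_chiv (b : E → ℤ) (u : E) : innerb b (chiv u) = b u := by
  simp [innerb, chiv, mul_ite]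

lemma conv_step (g : (E → ℤ) → WithTop ℝ) (b : E → ℤ)
    (hg : MnatConvex g) (hb : ∀ e, b e = 0 ∨ b e = 1)
    (k : ℤ) (xk : E → ℤ) (hxk : xk ∈ Tset g b k) :
    ∀ (N : ℕ) (p q : E → ℤ), p ∈ Tset g b (k+1) → q ∈ Tset g b (k-1) →
      (∑ e, if b e = 1 then (p e - q e).natAbs else 0) ≤ N →
      g xk + g xk ≤ g p + g q := by
  intro N
  induction N using Nat.strong_induction_on with
  | _ N ih =>
    intro p q hp hq hN
    obtain ⟨hpfin, hplev, hpmin⟩ := hp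
    obtain ⟨hqfin, hqlev, hqmin⟩ := hq
    obtain ⟨hxfin, hxlev, hxmin⟩ := hxk
    have hsum : ∑ e, b e * (p e - q e) = 2 := by
      have h1 : innerb b p - innerb b q = 2 := by rw [hplev, hqlev]; ring
      simpa [innerb, mul_sub, Finset.sum_sub_distrib] using h1
    have hu : ∃ u, b u = 1 ∧ q u < p u := by
      by_contra h
      push_neg at h
      have hle : ∑ e, b e * (p e - q e) ≤ 0 := by
        apply Finset.sum_nonpos
        intro e _
        rcases hb e with h0 | h1
        · simp [h0]
        · have := h e h1
          simp only [h1, one_mul]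
          omega
      omega
    obtain ⟨u, hbu, hupq⟩ := hu
    rcases hg.2 p q hpfin hqfin u hupq with hcase | ⟨v, hvpq, hcase⟩
    · -- simple exchange
      have hfins : g (p - chiv u) < ⊤ ∧ g (q + chiv u) < ⊤ :=
        WithTop.add_lt_top.mp (lt_of_le_of_lt hcase (WithTop.add_lt_top.mpr ⟨hpfin, hqfin⟩))
      have hl1 : innerb b (p - chiv u) = k := by
        rw [innerb_sub, innerb_chiv, hplev, hbu]; ring
      have hl2 : innerb b (q + chiv u) = k := by
        rw [innerb_add, innerb_chiv, hqlev, hbu]; ring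
      exact le_trans (add_le_add (hxmin _ hfins.1 hl1) (hxmin _ hfins.2 hl2)) hcase
    · rcases hb v with hbv | hbv
      · -- v in E₀
        have hfins : g (p - chiv u + chiv v) < ⊤ ∧ g (q + chiv u - chiv v) < ⊤ :=
          WithTop.add_lt_top.mp (lt_of_le_of_lt hcase (WithTop.add_lt_top.mpr ⟨hpfin, hqfin⟩))
        have hl1 : innerb b (p - chiv u + chiv v) = k := by
          rw [innerb_add, innerb_sub, innerb_chiv, innerb_chiv, hplev, hbu, hbv]; ring
        have hl2 : innerb b (q + chiv u - chiv v) = k := by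
          rw [innerb_sub, innerb_add, innerb_chiv, innerb_chiv, hqlev, hbu, hbv]; ring
        exact le_trans (add_le_add (hxmin _ hfins.1 hl1) (hxmin _ hfins.2 hl2)) hcase
      · -- v in E₁ : recurse with (p, q')
        set q' : E → ℤ := q + chiv u - chiv v with hq'def
        have hfins : g (p - chiv u + chiv v) < ⊤ ∧ g q' < ⊤ :=
          WithTop.add_lt_top.mp (lt_of_le_of_lt hcase (WithTop.add_lt_top.mpr ⟨hpfin, hqfin⟩))
        have hl1 : innerb b (p - chiv u + chiv v) = k + 1 := by
          rw [innerb_add, innerb_sub, innerb_chiv, innerb_chiv, hplev, hbu, hbv]; ring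
        have hl2 : innerb b q' = k - 1 := by
          rw [hq'def, innerb_sub, innerb_add, innerb_chiv, innerb_chiv, hqlev, hbu, hbv]; ring
        have hple : g p ≤ g (p - chiv u + chiv v) := hpmin _ hfins.1 hl1
        have hqle : g q ≤ g q' := hqmin _ hfins.2 hl2
        have hq'le : g q' ≤ g q := by
          have h2 : g p + g q' ≤ g p + g q :=
            le_trans (add_le_add_left hple _) hcase
          exact (WithTop.add_le_add_iff_left hpfin.ne).mp h2
        have hq'eq : g q' = g q := le_antisymm hq'le hqle
        have hq' : q' ∈ Tset g b (k-1) :=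
          ⟨hfins.2, hl2, fun y hy hly => hq'eq ▸ hqmin y hy hly⟩
        have huv : u ≠ v := by
          intro h; rw [h] at hupq; omega
        have hq'e : ∀ e, q' e = q e + (if e = u then 1 else 0) - (if e = v then 1 else 0) := by
          intro e; simp [hq'def, chiv]
        have hdec : (∑ e, if b e = 1 then (p e - q' e).natAbs else 0) <
            ∑ e, if b e = 1 then (p e - q e).natAbs else 0 := by
          apply Finset.sum_lt_sum
          · intro e _
            have he := hq'e e
            by_cases h1 : e = u <;> by_cases h2 : e = v <;>
              simp [h1, h2, huv] at he ⊢ <;> split_ifs <;> omega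
          · refine ⟨u, Finset.mem_univ u, ?_⟩
            have he := hq'e u
            simp [huv] at he
            simp [hbu, he]
            omega
        calc g xk + g xk ≤ g p + g q' := ih _ (lt_of_lt_of_le hdec hN) p q' ⟨hpfin, hplev, hpmin⟩ hq' le_rfl
          _ = g p + g q := by rw [hq'eq]
end

/-- each `x_k` for `k̲ ≤ k ≤ j` is Pareto optimal for the biobjective
problem of minimizing `(g(x), ⟨b,x⟩)` over `x ∈ dom g`. -/
theorem stmt_7 {E : Type*} [Fintype E] [DecidableEq E] [Nonempty E]
    (g : (E → ℤ) → WithTop ℝ) (b : E → ℤ)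
    (hg : MnatConvex g)
    (hfin : {x : E → ℤ | g x < ⊤}.Finite)
    (hb : ∀ e : E, b e = 0 ∨ b e = 1)
    (kmin kmax : ℤ)
    (hkmin : (Tset g b kmin).Nonempty ∧ ∀ k : ℤ, (Tset g b k).Nonempty → kmin ≤ k)
    (hkmax : (Tset g b kmax).Nonempty ∧ ∀ k : ℤ, (Tset g b k).Nonempty → k ≤ kmax)
    (x : ℤ → (E → ℤ))
    (hxk : ∀ k : ℤ, kmin ≤ k → k ≤ kmax → x k ∈ Tset g b k)
    (hstep : ∀ k : ℤ, kmin + 1 ≤ k → k ≤ kmax →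
      ∃ (u : E) (v : Option E), IsMinTransition g b (x k) u v ∧
        x (k - 1) = x k - chiv u + chiOpt v)
    (hgap : kmin + 1 ≤ kmax)
    (j : ℤ) (hj1 : kmin + 1 ≤ j) (hj2 : j ≤ kmax)
    (hgj : g (x j) < g (x (j - 1))) :
    ∀ k : ℤ, kmin ≤ k → k ≤ j →
      ¬∃ y : E → ℤ, g y < ⊤ ∧ g y ≤ g (x k) ∧ innerb b y ≤ innerb b (x k) ∧
        ¬(g y = g (x k) ∧ innerb b y = innerb b (x k)) := by
  have hconv : ∀ k : ℤ, kmin ≤ k - 1 → k + 1 ≤ kmax →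
      g (x k) + g (x k) ≤ g (x (k+1)) + g (x (k-1)) := by
    intro k h1 h2
    exact conv_step g b hg hb k (x k) (hxk k (by omega) (by omega)) _
      (x (k+1)) (x (k-1)) (hxk _ (by omega) h2) (hxk _ (by omega) (by omega)) le_rfl
  have hR : ∀ k : ℤ, kmin ≤ k → k ≤ kmax → ∃ r : ℝ, g (x k) = (r : WithTop ℝ) := by
    intro k h1 h2
    obtain ⟨r, hr⟩ := WithTop.ne_top_iff_exists.mp (hxk k h1 h2).1.ne
    exact ⟨r, hr.symm⟩
  have dec : ∀ d : ℕ, ∀ k : ℤ, kmin + 1 ≤ k → k = j - (d : ℤ) →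
      g (x k) < g (x (k-1)) := by
    intro d
    induction d with
    | zero =>
      intro k h1 h2
      have hk : k = j := by omega
      rw [hk]; exact hgj
    | succ d ih =>
      intro k h1 h2
      have h3 := ih (k+1) (by omega) (by omega)
      rw [show k + 1 - 1 = k from by ring] at h3
      have hc := hconv k (by omega) (by omega)
      obtain ⟨a, ha⟩ := hR (k-1) (by omega) (by omega)
      obtain ⟨c, hcv⟩ := hR k (by omega) (by omega)
      obtain ⟨e, he⟩ := hR (k+1) (by omega) (by omega)
      rw [ha] at hc ⊢; rw [hcv] at hc h3 ⊢; rw [he] at hc h3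
      have hcr : c + c ≤ e + a := by exact_mod_cast hc
      have hsr : e < c := by exact_mod_cast h3
      have : c < a := by linarith
      exact_mod_cast this
  have dec' : ∀ k : ℤ, kmin + 1 ≤ k → k ≤ j → g (x k) < g (x (k-1)) := by
    intro k h1 h2
    exact dec (j - k).toNat k h1 (by omega)
  have chain : ∀ d : ℕ, ∀ i : ℤ, kmin ≤ i → i + (d : ℤ) + 1 ≤ j →
      g (x (i + (d : ℤ) + 1)) < g (x i) := by
    intro d
    induction d with
    | zero =>
      intro i h1 h2
      have h3 := dec' (i+1) (by omega) (by omega)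
      rw [show i + 1 - 1 = i from by ring] at h3
      have hE : i + ((0:ℕ) : ℤ) + 1 = i + 1 := by push_cast; ring
      rw [hE]; exact h3
    | succ d ih =>
      intro i h1 h2
      have hA := ih (i+1) (by omega) (by omega)
      have hB := dec' (i+1) (by omega) (by omega)
      rw [show i + 1 - 1 = i from by ring] at hB
      have hE : i + ((d+1:ℕ) : ℤ) + 1 = (i+1) + (d : ℤ) + 1 := by push_cast; ring
      rw [hE]; exact lt_trans hA hB
  have chain' : ∀ i k : ℤ, kmin ≤ i → i < k → k ≤ j → g (x k) < g (x i) := by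
    intro i k h1 h2 h3
    have hE : i + (((k - i - 1).toNat : ℤ)) + 1 = k := by omega
    have := chain (k - i - 1).toNat i h1 (by omega)
    rwa [hE] at this
  rintro k hk1 hk2 ⟨y, hyfin, hgy, hby, hne⟩
  obtain ⟨hxkfin, hxklev, hxkmin⟩ := hxk k hk1 (le_trans hk2 hj2)
  rw [hxklev] at hby
  have hSfin : {w : E → ℤ | g w < ⊤ ∧ innerb b w = innerb b y}.Finite :=
    hfin.subset (fun w hw => hw.1)
  obtain ⟨m, hmS, hmmin⟩ := Set.exists_min_image _ g hSfin ⟨y, hyfin, rfl⟩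
  have hTne : (Tset g b (innerb b y)).Nonempty :=
    ⟨m, hmS.1, hmS.2, fun y' h1 h2 => hmmin y' ⟨h1, h2⟩⟩
  have hi1 : kmin ≤ innerb b y := hkmin.2 _ hTne
  by_cases hik : innerb b y = k
  · have h1 : g (x k) ≤ g y := hxkmin y hyfin hik
    exact hne ⟨le_antisymm hgy h1, by rw [hxklev, hik]⟩
  · have hik' : innerb b y < k := lt_of_le_of_ne hby hik
    have hxiT := hxk (innerb b y) hi1 (by omega)
    have h1 : g (x (innerb b y)) ≤ g y := hxiT.2.2 y hyfin rfl
    have h2 : g (x k) < g (x (innerb b y)) := chain' _ k hi1 hik' hk2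
    exact absurd (lt_of_lt_of_le (lt_of_lt_of_le h2 h1) hgy) (lt_irrefl _)
end
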